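/- Let f : ℝ → ℝ satisfy: f and f'' are nondecreasing and convex (f twice continuously differentiable). Then either f(x) = O(x) as x → +∞, or liminf_{x→+∞} f(x)/x² > 0 (possibly +∞). -/

import Mathlib

open Filter Asymptotics Topology

/-- Derivative of a monotone differentiable function is nonnegative. -/
lemma monotone_deriv_nonneg {f : ℝ → ℝ} (hf : Differentiable ℝ f) (hm : Monotone f) (a : ℝ) :
    0 ≤ deriv f a := by
  have h := (hf a).hasDerivAt
  have hslope : Tendsto (slope f a) (𝓝[>] a) (𝓝 (deriv f a)) :=
    (hasDerivAt_iff_tendsto_slope.mp h).mono_left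
      (nhdsWithin_mono _ (fun x hx => ne_of_gt hx))
  refine ge_of_tendsto hslope ?_
  filter_upwards [self_mem_nhdsWithin] with x hx
  have hxa : (0:ℝ) < x - a := sub_pos.mpr hx
  have h2 : (0:ℝ) ≤ f x - f a := sub_nonneg.mpr (hm hx.le)
  rw [slope_def_field]
  exact div_nonneg h2 hxa.le

/-- If `f ∈ C²` with `f` and `f''` nondecreasing and convex, then either `f(x) = O(x)`
as `x → +∞`, or `liminf f(x)/x² > 0` (possibly `+∞`), expressed as: eventually
`f(x)/x² ≥ c` for some `c > 0`. -/
theorem F3_growth_dichotomy (f : ℝ → ℝ) (hf : ContDiff ℝ 2 f)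
    (hmono : Monotone f) (hconv : ConvexOn ℝ Set.univ f)
    (hmono'' : Monotone (deriv (deriv f)))
    (hconv'' : ConvexOn ℝ Set.univ (deriv (deriv f))) :
    (f =O[atTop] fun x : ℝ => x) ∨ ∃ c > 0, ∀ᶠ x in atTop, c ≤ f x / x ^ 2 := by
  have hf2 : ContDiff ℝ ((1:ℕ) + 1) f := by exact_mod_cast hf
  obtain ⟨hd1, -, hc1⟩ := contDiff_succ_iff_deriv.mp hf2
  have hd2 : Differentiable ℝ (deriv f) := hc1.differentiable (by norm_num)
  -- monotone derivative from convexity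
  have hder_mono : Monotone (deriv f) := by
    have := hconv.monotoneOn_deriv (fun x _ => hd1 x)
    intro x y hxy
    exact this (Set.mem_univ x) (Set.mem_univ y) hxy
  by_cases hcase : ∃ a, 0 < deriv (deriv f) a
  · -- quadratic growth
    obtain ⟨a, ha⟩ := hcase
    set c := deriv (deriv f) a with hc
    right
    refine ⟨c / 16, by positivity, ?_⟩
    -- f x ≥ f a + (c/2)(x-a)^2 for x ≥ a
    -- step 1: deriv f x ≥ deriv f a + c*(x-a) for x ≥ a
    have step1 : ∀ x ∈ Set.Ici a, deriv f a + c * (x - a) ≤ deriv f x := by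
      have hmonoH : MonotoneOn (fun x => deriv f x - c * x) (Set.Ici a) := by
        apply monotoneOn_of_deriv_nonneg (convex_Ici a)
        · exact (hd2.continuous.sub (continuous_const.mul continuous_id)).continuousOn
        · exact (hd2.sub ((differentiable_const c).mul differentiable_id)).differentiableOn
        · intro x hx
          rw [interior_Ici] at hx
          have h1 : HasDerivAt (fun x => deriv f x - c * x) (deriv (deriv f) x - c) x := by
            simpa using (hd2 x).hasDerivAt.fun_sub ((hasDerivAt_id x).const_mul c)
          rw [h1.deriv, sub_nonneg]
          exact hmono'' (le_of_lt hx)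
      intro x hx
      have := hmonoH (Set.self_mem_Ici) hx hx
      simp only at this
      linarith
    -- step 2: f x ≥ f a + (c/2)*(x-a)^2 for x ≥ a
    have hfa' : 0 ≤ deriv f a := monotone_deriv_nonneg hd1 hmono a
    have step2 : ∀ x ∈ Set.Ici a, f a + c / 2 * (x - a) ^ 2 ≤ f x := by
      have hmonoG : MonotoneOn (fun x => f x - c / 2 * (x - a) ^ 2) (Set.Ici a) := by
        apply monotoneOn_of_deriv_nonneg (convex_Ici a)
        · exact (hd1.continuous.sub (continuous_const.mul
            ((continuous_id.sub continuous_const).pow 2))).continuousOn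
        · exact (hd1.sub ((differentiable_const _).mul
            ((differentiable_id.sub (differentiable_const a)).pow 2))).differentiableOn
        · intro x hx
          rw [interior_Ici] at hx
          have h1 := (hd1 x).hasDerivAt.sub
            ((((hasDerivAt_id x).sub_const a).pow 2).const_mul (c / 2))
          simp only [id_eq, pow_one, mul_one] at h1
          have h2 : HasDerivAt (fun x : ℝ => f x - c / 2 * (x - a) ^ 2)
              (deriv f x - c * (x - a)) x := by
            exact h1.congr_deriv (by ring)
          rw [h2.deriv, sub_nonneg]
          have := step1 x (Set.mem_Ici.mpr (le_of_lt hx))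
          linarith
      intro x hx
      have := hmonoG (Set.self_mem_Ici) hx hx
      simp only [sub_self, ne_eq, OfNat.ofNat_ne_zero, not_false_eq_true, zero_pow,
        mul_zero, sub_zero] at this
      linarith
    -- step 3: conclude eventually
    have hev1 : ∀ᶠ x : ℝ in atTop, (2 * a ≤ x ∧ 0 < x) := by
      filter_upwards [eventually_ge_atTop (2 * a), eventually_gt_atTop 0] with x h1 h2
      exact ⟨h1, h2⟩
    have hev2 : ∀ᶠ x : ℝ in atTop, -f a ≤ c / 16 * x ^ 2 := by
      have ht : Tendsto (fun x : ℝ => c / 16 * x ^ 2) atTop atTop := by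
        apply Tendsto.const_mul_atTop (by positivity)
        exact tendsto_pow_atTop (by norm_num)
      exact ht.eventually_ge_atTop _
    filter_upwards [hev1, hev2, eventually_ge_atTop a] with x ⟨h2a, hx0⟩ hfa hxa
    rw [le_div_iff₀ (by positivity : (0:ℝ) < x ^ 2)]
    have hsq : x ^ 2 / 4 ≤ (x - a) ^ 2 := by
      rcases le_or_gt a 0 with h | h
      · nlinarith
      · nlinarith
    have := step2 x hxa
    nlinarith
  · -- f'' ≤ 0 everywhere, so deriv f is antitone, hence constant, f affine
    left
    push_neg at hcase
    have hanti : Antitone (deriv f) := by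
      apply antitone_of_deriv_nonpos hd2
      intro x; exact hcase x
    have hconst : ∀ x, deriv f x = deriv f 0 := by
      intro x
      rcases le_total x 0 with h | h
      · exact le_antisymm (hder_mono h) (hanti h)
      · exact le_antisymm (hanti h) (hder_mono h)
    set k := deriv f 0 with hk
    have haffine : ∀ x, f x = f 0 + k * x := by
      have hderiv0 : ∀ x, deriv (fun x => f x - k * x) x = 0 := by
        intro x
        have h1 : HasDerivAt (fun x : ℝ => f x - k * x) (deriv f x - k) x := by
          simpa using (hd1 x).hasDerivAt.fun_sub ((hasDerivAt_id x).const_mul k)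
        rw [h1.deriv, hconst x, sub_self]
      have := is_const_of_deriv_eq_zero
        (hd1.sub ((differentiable_const k).mul differentiable_id)) hderiv0
      intro x
      have h := this x 0
      simp only [Pi.sub_apply, Pi.mul_apply, id_eq, mul_zero, sub_zero] at h
      linarith [h]
    rw [isBigO_iff]
    refine ⟨|f 0| + |k|, ?_⟩
    filter_upwards [eventually_ge_atTop (1:ℝ)] with x hx
    rw [haffine x]
    have hx0 : (0:ℝ) < x := lt_of_lt_of_le one_pos hx
    calc ‖f 0 + k * x‖ ≤ |f 0| + |k * x| := norm_add_le _ _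
      _ = |f 0| + |k| * |x| := by rw [abs_mul]
      _ ≤ |f 0| * |x| + |k| * |x| := by
          have : (1:ℝ) ≤ |x| := by rwa [abs_of_pos hx0]
          nlinarith [abs_nonneg (f 0), abs_nonneg k]
      _ = (|f 0| + |k|) * ‖x‖ := by rw [Real.norm_eq_abs]; ring
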